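/- Let H be a weak Hopf algebra with bijective antipode viewed as an R-bialgebroid over R = Im(Π^L). Then the category of left weak H-module coalgebras is isomorphic to the category of left module coalgebras over the R-bialgebroid H. In one direction, a weak H-module coalgebra (C, Δ_C, ε_C) becomes an R-coring via the projected coproduct c ↦ c_{(1)} ⊗_R c_{(2)} and counit c ↦ ε_C(1_{(1)}·c) 1_{(2)} ∈ R; in the other direction, an H-module coalgebra over the bialgebroid becomes a weak module coalgebra with coproduct c ↦ 1_{(1)}·c_{(1)} ⊗ 1_{(2)}·c_{(2)} and counit ε ∘ ε_C. -/

import Mathlib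

open TensorProduct LinearMap MulOpposite

noncomputable section
namespace DK

variable (k : Type*) [CommRing k] (H : Type*) [Ring H] [Algebra k H]

/-- Given `u = Σ xᵢ ⊗ bᵢ ∈ H ⊗ B` and `ε : H → k`, the linear map `g ↦ Σ ε(xᵢ * g) • bᵢ`. -/
def coPi (B : Type*) [AddCommGroup B] [Module k B] (ε : H →ₗ[k] k) (u : H ⊗[k] B) :
    H →ₗ[k] B :=
  ((TensorProduct.lid k B).toLinearMap
      ∘ₗ LinearMap.rTensor B (ε ∘ₗ LinearMap.mul' k H)
      ∘ₗ (TensorProduct.assoc k H H B).symm.toLinearMap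
      ∘ₗ LinearMap.lTensor H (TensorProduct.comm k B H).toLinearMap
      ∘ₗ (TensorProduct.assoc k H B H).toLinearMap)
    ∘ₗ TensorProduct.mk k (H ⊗[k] B) H u

/-- Given `u = Σ bᵢ ⊗ xᵢ ∈ B ⊗ H` and `ε : H → k`, the linear map `g ↦ Σ ε(g * xᵢ) • bᵢ`. -/
def coPiR (B : Type*) [AddCommGroup B] [Module k B] (ε : H →ₗ[k] k) (u : B ⊗[k] H) :
    H →ₗ[k] B :=
  ((TensorProduct.rid k B).toLinearMap
      ∘ₗ LinearMap.lTensor B (ε ∘ₗ LinearMap.mul' k H ∘ₗ (TensorProduct.comm k H H).toLinearMap)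
      ∘ₗ (TensorProduct.assoc k B H H).toLinearMap)
    ∘ₗ TensorProduct.mk k (B ⊗[k] H) H u

variable (Δ : H →ₗ[k] H ⊗[k] H) (ε : H →ₗ[k] k)

/-- `Π^L(g) = ε(1₍₁₎ g) • 1₍₂₎`. -/
def PiL : H →ₗ[k] H := coPi k H H ε (Δ 1)

/-- `Π^R(g) = ε(g 1₍₂₎) • 1₍₁₎`. -/
def PiR : H →ₗ[k] H := coPiR k H H ε (Δ 1)

/-- the map `h₍₁₎ ε(g h₍₂₎)` as a function of the input of `Δ`, i.e.
`u = Σ aᵢ ⊗ bᵢ ↦ Σ ε(g bᵢ) • aᵢ`. -/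
def PiRmap (g : H) : H ⊗[k] H →ₗ[k] H :=
  (TensorProduct.rid k H).toLinearMap ∘ₗ LinearMap.lTensor H (ε ∘ₗ LinearMap.mulLeft k g)

/-- `(a ⊗ b) ↦ ε(x a) * ε(b z)`. -/
def eps2 (x z : H) : H ⊗[k] H →ₗ[k] k :=
  (TensorProduct.lid k k).toLinearMap
    ∘ₗ TensorProduct.map (ε ∘ₗ LinearMap.mulLeft k x) (ε ∘ₗ LinearMap.mulRight k z)

/-- `(a ⊗ b) ↦ ε(a z) * ε(x b)`. -/
def eps2' (x z : H) : H ⊗[k] H →ₗ[k] k :=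
  (TensorProduct.lid k k).toLinearMap
    ∘ₗ TensorProduct.map (ε ∘ₗ LinearMap.mulRight k z) (ε ∘ₗ LinearMap.mulLeft k x)

/-- The weak bialgebra axioms for `(H, ·, Δ, ε)`: `Δ` is a multiplicative coassociative
counital coproduct, the weak counit axiom
`ε(xyz) = ε(x y₍₁₎) ε(y₍₂₎ z) = ε(x y₍₂₎) ε(y₍₁₎ z)` holds, and the weak unit axiom
`(Δ ⊗ id)Δ(1) = (Δ(1) ⊗ 1)(1 ⊗ Δ(1)) = (1 ⊗ Δ(1))(Δ(1) ⊗ 1)` holds. -/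
def IsWeakBialgebra : Prop :=
  (∀ x y : H, Δ (x * y) = Δ x * Δ y) ∧
  (∀ h : H, (TensorProduct.assoc k H H H) ((LinearMap.rTensor H Δ) (Δ h)) =
      (LinearMap.lTensor H Δ) (Δ h)) ∧
  (∀ h : H, (TensorProduct.lid k H) ((LinearMap.rTensor H ε) (Δ h)) = h) ∧
  (∀ h : H, (TensorProduct.rid k H) ((LinearMap.lTensor H ε) (Δ h)) = h) ∧
  (∀ x y z : H, ε (x * y * z) = eps2 k H ε x z (Δ y)) ∧
  (∀ x y z : H, ε (x * y * z) = eps2' k H ε x z (Δ y)) ∧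
  ((LinearMap.lTensor H Δ) (Δ 1) =
      (TensorProduct.assoc k H H H) ((Δ 1) ⊗ₜ[k] (1 : H)) * ((1 : H) ⊗ₜ[k] (Δ 1))) ∧
  ((LinearMap.lTensor H Δ) (Δ 1) =
      ((1 : H) ⊗ₜ[k] (Δ 1)) * (TensorProduct.assoc k H H H) ((Δ 1) ⊗ₜ[k] (1 : H)))

variable (S : H →ₗ[k] H)

/-- The weak Hopf algebra axioms: `H` is a weak bialgebra with antipode `S` satisfying
`h₍₁₎ S(h₍₂₎) = Π^L(h)`, `S(h₍₁₎) h₍₂₎ = Π^R(h)` and `S(h₍₁₎) h₍₂₎ S(h₍₃₎) = S(h)`. -/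
def IsWeakHopf : Prop :=
  IsWeakBialgebra k H Δ ε ∧
  (∀ h : H, LinearMap.mul' k H ((LinearMap.lTensor H S) (Δ h)) = PiL k H Δ ε h) ∧
  (∀ h : H, LinearMap.mul' k H ((LinearMap.rTensor H S) (Δ h)) = PiR k H Δ ε h) ∧
  (∀ h : H,
    (LinearMap.mul' k H ∘ₗ LinearMap.lTensor H (LinearMap.mul' k H))
        ((TensorProduct.map S (TensorProduct.map LinearMap.id S))
          ((LinearMap.lTensor H Δ) (Δ h))) = S h)

end DK
end
noncomputable section
namespace DK
open TensorProduct LinearMap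

variable (k : Type*) [CommRing k] (H : Type*) [Ring H] [Algebra k H]
  (Δ : H →ₗ[k] H ⊗[k] H) (ε : H →ₗ[k] k)
  (C : Type*) [AddCommGroup C] [Module k C]
  (act : H →ₗ[k] C →ₗ[k] C) (ΔC : C →ₗ[k] C ⊗[k] C) (εC : C →ₗ[k] k)

/-- Evaluation `H ⊗ C → C` of the action. -/
def evC : H ⊗[k] C →ₗ[k] C := TensorProduct.lift act

/-- Diagonal action `(g ⊗ g') ⊗ (c ⊗ c') ↦ g·c ⊗ g'·c'`. -/
def Psi2 : (H ⊗[k] H) ⊗[k] (C ⊗[k] C) →ₗ[k] C ⊗[k] C :=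
  TensorProduct.map (evC k H C act) (evC k H C act) ∘ₗ
    (TensorProduct.tensorTensorTensorComm k H H C C).toLinearMap

/-- `C` is a left weak `H`-module coalgebra: a `k`-coalgebra with a left `H`-action such
that `Δ_C(h·c) = h₍₁₎·c₍₁₎ ⊗ h₍₂₎·c₍₂₎` and `ε_C(hg·c) = ε_H(h g₍₂₎) ε_C(g₍₁₎·c)`. -/
def IsWeakModuleCoalgebra : Prop :=
  (∀ c : C, (TensorProduct.assoc k C C C) ((LinearMap.rTensor C ΔC) (ΔC c)) =
      (LinearMap.lTensor C ΔC) (ΔC c)) ∧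
  (∀ c : C, (TensorProduct.lid k C) ((LinearMap.rTensor C εC) (ΔC c)) = c) ∧
  (∀ c : C, (TensorProduct.rid k C) ((LinearMap.lTensor C εC) (ΔC c)) = c) ∧
  (∀ (g h : H) (c : C), act (g * h) c = act g (act h c)) ∧
  (∀ c : C, act 1 c = c) ∧
  (∀ (h : H) (c : C), ΔC (act h c) = (Psi2 k H C act) ((Δ h) ⊗ₜ[k] (ΔC c))) ∧
  (∀ (h g : H) (c : C), εC (act (h * g) c) =
    (TensorProduct.lid k k)
      ((TensorProduct.map (εC ∘ₗ act.flip c) (ε ∘ₗ LinearMap.mulLeft k h)) (Δ g)))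

/-- The counit `ε̃_C : C → R ⊆ H`, `c ↦ ε_C(1₍₁₎ · c) 1₍₂₎`. -/
def etil : C →ₗ[k] H :=
  ((TensorProduct.lid k H).toLinearMap
      ∘ₗ LinearMap.rTensor H (εC ∘ₗ evC k H C act)
      ∘ₗ (TensorProduct.assoc k H C H).symm.toLinearMap
      ∘ₗ LinearMap.lTensor H (TensorProduct.comm k H C).toLinearMap
      ∘ₗ (TensorProduct.assoc k H H C).toLinearMap)
    ∘ₗ TensorProduct.mk k (H ⊗[k] H) C (Δ 1)

end DK
end

noncomputable section
namespace DK14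
open TensorProduct LinearMap

variable (k : Type*) [CommRing k] (H : Type*) [Ring H] [Algebra k H]
  (Δ : H →ₗ[k] H ⊗[k] H) (ε : H →ₗ[k] k) (Sinv : H →ₗ[k] H)
  (C : Type*) [AddCommGroup C] [Module k C] (act : H →ₗ[k] C →ₗ[k] C)

/-- Balancing relations for `C ⊗_R C` over `R = Im Π^L`; the `R`-bimodule structure on `C`
is `r · c · r' = (s_H r t_H r') · c` with `s_H` the inclusion and `t_H = S⁻¹|_R`. -/
def relCb : Submodule k (C ⊗[k] C) :=
  Submodule.span k {x | ∃ (g : H) (c c' : C),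
    x = (act (Sinv (DK.PiL k H Δ ε g)) c) ⊗ₜ[k] c' - c ⊗ₜ[k] (act (DK.PiL k H Δ ε g) c')}

/-- Balancing relations for `C ⊗_R C ⊗_R C` inside `C ⊗ (C ⊗ C)`. -/
def relCb3 : Submodule k (C ⊗[k] (C ⊗[k] C)) :=
  Submodule.span k
    ({x | ∃ (g : H) (c : C) (y : C ⊗[k] C),
        x = (act (Sinv (DK.PiL k H Δ ε g)) c) ⊗ₜ[k] y -
          c ⊗ₜ[k] ((LinearMap.rTensor C (act (DK.PiL k H Δ ε g))) y)} ∪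
     {x | ∃ (g : H) (c c' c'' : C),
        x = c ⊗ₜ[k] ((act (Sinv (DK.PiL k H Δ ε g)) c') ⊗ₜ[k] c'') -
          c ⊗ₜ[k] (c' ⊗ₜ[k] (act (DK.PiL k H Δ ε g) c''))})

variable (ΔCb : C →ₗ[k] C ⊗[k] C) (εCb : C →ₗ[k] H)

/-- `C` is a left module coalgebra over the `R`-bialgebroid `H` (`R = Im Π^L`): an
`R`-coring with a left `H`-action whose coproduct and counit (a map `C → R ⊆ H`) are
`H`-linear. -/
def IsBgdModuleCoalgebra : Prop :=
  (∀ (g h : H) (c : C), act (g * h) c = act g (act h c)) ∧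
  (∀ c : C, act 1 c = c) ∧
  -- the counit takes values in `R = Im Π^L`:
  (∀ c : C, DK.PiL k H Δ ε (εCb c) = εCb c) ∧
  -- `R`-coring axioms:
  (∀ c : C, (relCb3 k H Δ ε Sinv C act).mkQ
      ((TensorProduct.assoc k C C C) ((LinearMap.rTensor C ΔCb) (ΔCb c))) =
    (relCb3 k H Δ ε Sinv C act).mkQ ((LinearMap.lTensor C ΔCb) (ΔCb c))) ∧
  (∀ c : C, DK.evC k H C act ((TensorProduct.map εCb LinearMap.id) (ΔCb c)) = c) ∧
  (∀ c : C, DK.evC k H C act ((TensorProduct.map (Sinv ∘ₗ εCb) LinearMap.id)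
      ((TensorProduct.comm k C C) (ΔCb c))) = c) ∧
  -- `Δ_C` is `H`-linear:
  (∀ (h : H) (c : C), (relCb k H Δ ε Sinv C act).mkQ (ΔCb (act h c)) =
    (relCb k H Δ ε Sinv C act).mkQ ((DK.Psi2 k H C act) ((Δ h) ⊗ₜ[k] (ΔCb c)))) ∧
  -- `ε_C` is `H`-linear: `ε_C(h · c) = Π^L(h s_H(ε_C c))`:
  (∀ (h : H) (c : C), εCb (act h c) = DK.PiL k H Δ ε (h * εCb c))

/-- The section `σ_C : C ⊗_R C → C ⊗ C`, `c ⊗ c' ↦ 1₍₁₎·c ⊗ 1₍₂₎·c'`. -/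
def sigmaC : C ⊗[k] C →ₗ[k] C ⊗[k] C :=
  DK.Psi2 k H C act ∘ₗ TensorProduct.mk k (H ⊗[k] H) (C ⊗[k] C) (Δ 1)

end DK14


noncomputable section
namespace WHAux
open TensorProduct LinearMap
set_option maxHeartbeats 1000000
set_option synthInstance.maxHeartbeats 400000
set_option linter.unusedSectionVars false

variable {k : Type*} [CommRing k] {H : Type*} [Ring H] [Algebra k H]
variable {Δ : H →ₗ[k] H ⊗[k] H} {ε : H →ₗ[k] k} {S Sinv : H →ₗ[k] H}
variable {s : Finset (H × H)}

/-- `Π̄^L(g) = ε(1₍₂₎ g) 1₍₁₎` w.r.t. a fixed representation of `Δ 1`. -/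
def pibL (ε : H →ₗ[k] k) (s : Finset (H × H)) (g : H) : H :=
  ∑ p ∈ s, ε (p.2 * g) • p.1

section bialg
variable (hw : DK.IsWeakBialgebra k H Δ ε)
  (hu : Δ 1 = ∑ p ∈ s, p.1 ⊗ₜ[k] p.2)

include hw

lemma wM : ∀ x y : H, Δ (x * y) = Δ x * Δ y := hw.1
lemma wCA : ∀ h : H, (TensorProduct.assoc k H H H) ((LinearMap.rTensor H Δ) (Δ h)) =
    (LinearMap.lTensor H Δ) (Δ h) := hw.2.1
lemma wCUl : ∀ h : H, (TensorProduct.lid k H) ((LinearMap.rTensor H ε) (Δ h)) = h :=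
  hw.2.2.1
lemma wCUr : ∀ h : H, (TensorProduct.rid k H) ((LinearMap.lTensor H ε) (Δ h)) = h :=
  hw.2.2.2.1
lemma wWC1 : ∀ x y z : H, ε (x * y * z) = DK.eps2 k H ε x z (Δ y) := hw.2.2.2.2.1
lemma wWC2 : ∀ x y z : H, ε (x * y * z) = DK.eps2' k H ε x z (Δ y) := hw.2.2.2.2.2.1

lemma e1r : ∀ h : H, Δ h * Δ 1 = Δ h := fun h => by rw [← wM hw, mul_one]
lemma e1l : ∀ h : H, Δ 1 * Δ h = Δ h := fun h => by rw [← wM hw, one_mul]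

include hu

lemma piL_eq (g : H) : DK.PiL k H Δ ε g = ∑ p ∈ s, ε (p.1 * g) • p.2 := by
  simp [DK.PiL, DK.coPi, hu, map_sum]

lemma piR_eq (g : H) : DK.PiR k H Δ ε g = ∑ p ∈ s, ε (g * p.2) • p.1 := by
  simp [DK.PiR, DK.coPiR, hu, map_sum]

lemma sum_eps1 : ∑ p ∈ s, ε p.1 • p.2 = (1 : H) := by
  have := wCUl hw 1; rw [hu] at this; simpa [map_sum] using this

lemma sum_eps2 : ∑ p ∈ s, ε p.2 • p.1 = (1 : H) := by
  have := wCUr hw 1; rw [hu] at this; simpa [map_sum] using this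

lemma wu1e : ∑ p ∈ s, p.1 ⊗ₜ[k] Δ p.2 =
    ∑ p ∈ s, ∑ q ∈ s, p.1 ⊗ₜ[k] ((p.2 * q.1) ⊗ₜ[k] q.2) := by
  have h7 := hw.2.2.2.2.2.2.1
  rw [hu] at h7
  simp only [map_sum, TensorProduct.sum_tmul, TensorProduct.tmul_sum, Finset.sum_mul,
    Finset.mul_sum, Algebra.TensorProduct.tmul_mul_tmul, Algebra.TensorProduct.one_def,
    TensorProduct.assoc_tmul, lTensor_tmul, rTensor_tmul, one_mul, mul_one] at h7
  rw [h7, Finset.sum_comm]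

lemma wu2e : ∑ p ∈ s, p.1 ⊗ₜ[k] Δ p.2 =
    ∑ p ∈ s, ∑ q ∈ s, q.1 ⊗ₜ[k] ((p.1 * q.2) ⊗ₜ[k] p.2) := by
  have h8 := hw.2.2.2.2.2.2.2
  rw [hu] at h8
  simp only [map_sum, TensorProduct.sum_tmul, TensorProduct.tmul_sum, Finset.sum_mul,
    Finset.mul_sum, Algebra.TensorProduct.tmul_mul_tmul, Algebra.TensorProduct.one_def,
    TensorProduct.assoc_tmul, lTensor_tmul, rTensor_tmul, one_mul, mul_one] at h8
  rw [h8, Finset.sum_comm]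

lemma l3e1 : ∑ p ∈ s, Δ p.1 ⊗ₜ[k] p.2 =
    ∑ p ∈ s, ∑ q ∈ s, (p.1 ⊗ₜ[k] (p.2 * q.1)) ⊗ₜ[k] q.2 := by
  apply (TensorProduct.assoc k H H H).injective
  have hca := wCA hw 1
  rw [hu, map_sum] at hca
  simp only [map_sum, rTensor_tmul, lTensor_tmul] at hca
  rw [map_sum, hca, wu1e hw hu]
  simp [map_sum, TensorProduct.assoc_tmul]

lemma l3e2 : ∑ p ∈ s, Δ p.1 ⊗ₜ[k] p.2 =
    ∑ p ∈ s, ∑ q ∈ s, (q.1 ⊗ₜ[k] (p.1 * q.2)) ⊗ₜ[k] p.2 := by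
  apply (TensorProduct.assoc k H H H).injective
  have hca := wCA hw 1
  rw [hu, map_sum] at hca
  simp only [map_sum, rTensor_tmul, lTensor_tmul] at hca
  rw [map_sum, hca, wu2e hw hu]
  simp [map_sum, TensorProduct.assoc_tmul]

lemma d3a : ∀ x g : H, ε (x * DK.PiL k H Δ ε g) = ε (x * g) := by
  intro x g
  have h := wWC2 hw x 1 g
  rw [mul_one, hu] at h
  simp only [DK.eps2', map_sum, coe_comp, Function.comp_apply, map_tmul, mulLeft_apply,
    mulRight_apply, lid_tmul, smul_eq_mul] at h
  rw [piL_eq hw hu, Finset.mul_sum]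
  simp only [mul_smul_comm, map_sum, map_smul, smul_eq_mul]
  exact h.symm

lemma d3b : ∀ x g : H, ε (x * pibL ε s g) = ε (x * g) := by
  intro x g
  have h := wWC1 hw x 1 g
  rw [mul_one, hu] at h
  simp only [DK.eps2, map_sum, coe_comp, Function.comp_apply, map_tmul, mulLeft_apply,
    mulRight_apply, lid_tmul, smul_eq_mul] at h
  rw [pibL, Finset.mul_sum]
  simp only [mul_smul_comm, map_sum, map_smul, smul_eq_mul]
  exact ((h.trans (Finset.sum_congr rfl fun p _ => mul_comm _ _)).symm)

lemma epiL : ∀ g : H, ε (DK.PiL k H Δ ε g) = ε g := by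
  intro g
  have := d3a hw hu 1 g
  simpa using this


lemma d5a (g : H) : Δ (DK.PiL k H Δ ε g) = Δ 1 * ((DK.PiL k H Δ ε g) ⊗ₜ[k] (1:H)) := by
  have h := congrArg ((TensorProduct.lid k (H ⊗[k] H)).toLinearMap ∘ₗ
      rTensor (H ⊗[k] H) (ε ∘ₗ mulRight k g)) (wu2e hw hu)
  simp only [map_sum, coe_comp, LinearEquiv.coe_coe, Function.comp_apply, rTensor_tmul,
    mulRight_apply, lid_tmul] at h
  rw [piL_eq hw hu]
  conv_lhs => rw [map_sum]
  simp only [map_smul]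
  rw [h, hu]
  simp only [TensorProduct.sum_tmul, Finset.sum_mul, Finset.mul_sum,
    TensorProduct.smul_tmul', Algebra.TensorProduct.tmul_mul_tmul, mul_smul_comm,
    mul_one]
  rw [Finset.sum_comm]

lemma d5b (g : H) : Δ (pibL ε s g) = Δ 1 * ((1:H) ⊗ₜ[k] pibL ε s g) := by
  have h := congrArg ((TensorProduct.rid k (H ⊗[k] H)).toLinearMap ∘ₗ
      lTensor (H ⊗[k] H) (ε ∘ₗ mulRight k g)) (l3e1 hw hu)
  simp only [map_sum, coe_comp, LinearEquiv.coe_coe, Function.comp_apply, lTensor_tmul,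
    mulRight_apply, rid_tmul] at h
  rw [pibL]
  conv_lhs => rw [map_sum]
  simp only [map_smul]
  rw [h, hu]
  simp only [TensorProduct.tmul_sum, Finset.sum_mul, Finset.mul_sum,
    TensorProduct.tmul_smul, Algebra.TensorProduct.tmul_mul_tmul, mul_smul_comm,
    one_mul, mul_one]
  simp only [Finset.smul_sum]
  rw [Finset.sum_comm]

lemma d2' : ∑ q ∈ s, (pibL ε s q.1) ⊗ₜ[k] q.2 = Δ 1 := by
  have h := congrArg (rTensor H ((TensorProduct.rid k H).toLinearMap ∘ₗ lTensor H ε))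
    (l3e1 hw hu)
  simp only [map_sum, rTensor_tmul, coe_comp, LinearEquiv.coe_coe, Function.comp_apply]
    at h
  have hc : ∀ p : H × H,
      (TensorProduct.rid k H) ((lTensor H ε) (Δ p.1)) ⊗ₜ[k] p.2 = p.1 ⊗ₜ[k] p.2 := by
    intro p; rw [wCUr hw]
  simp only [hc, lTensor_tmul, rid_tmul] at h
  rw [hu, h, Finset.sum_comm]
  simp only [pibL, TensorProduct.sum_tmul, TensorProduct.smul_tmul']

lemma sum_piL_mul : ∑ q ∈ s, DK.PiL k H Δ ε q.1 * q.2 = 1 := by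
  have huu : Δ (1:H) * Δ (1:H) = Δ 1 := e1r hw 1
  rw [hu] at huu
  have h := congrArg ((TensorProduct.lid k H).toLinearMap ∘ₗ rTensor H ε) huu
  simp only [Finset.sum_mul, Finset.mul_sum, Algebra.TensorProduct.tmul_mul_tmul,
    map_sum, rTensor_tmul, coe_comp, LinearEquiv.coe_coe, Function.comp_apply,
    lid_tmul] at h
  rw [sum_eps1 hw hu] at h
  rw [← h]
  apply Finset.sum_congr rfl
  intro q _
  rw [piL_eq hw hu, Finset.sum_mul]
  simp only [smul_mul_assoc]

end bialg

section hopf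
variable (hh : DK.IsWeakHopf k H Δ ε S)
  (hu : Δ 1 = ∑ p ∈ s, p.1 ⊗ₜ[k] p.2)

include hh hu

lemma pr1 : ∑ p ∈ s, S p.1 * p.2 = 1 := by
  have h := hh.2.2.1 1
  rw [hu] at h
  simp only [map_sum, rTensor_tmul, mul'_apply] at h
  rw [h, piR_eq hh.1 hu]
  simp only [one_mul]
  exact sum_eps2 hh.1 hu

lemma b2' (g : H) : S (pibL ε s g) = DK.PiL k H Δ ε g := by
  have hw := hh.1
  have hΔw : Δ (pibL ε s g) = Δ 1 * ((1:H) ⊗ₜ[k] pibL ε s g) := d5b hw hu g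
  have hΔw' : Δ (pibL ε s g) = ∑ p ∈ s, p.1 ⊗ₜ[k] (p.2 * pibL ε s g) := by
    rw [hΔw, hu]
    simp only [Finset.sum_mul, Algebra.TensorProduct.tmul_mul_tmul, mul_one]
  have hc : ∀ x : H, Δ (x * pibL ε s g) = Δ x * ((1:H) ⊗ₜ[k] pibL ε s g) := by
    intro x; rw [wM hw, hΔw, ← mul_assoc, e1r hw]
  have h2 : lTensor H Δ (Δ (pibL ε s g)) =
      ∑ p ∈ s, ∑ q ∈ s, p.1 ⊗ₜ[k] ((p.2 * q.1) ⊗ₜ[k] (q.2 * pibL ε s g)) := by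
    rw [hΔw', map_sum]
    simp only [lTensor_tmul, hc]
    have h1 := congrArg (lTensor H (mulRight k ((1:H) ⊗ₜ[k] pibL ε s g))) (wu1e hw hu)
    simp only [map_sum, lTensor_tmul, mulRight_apply,
      Algebra.TensorProduct.tmul_mul_tmul, mul_one] at h1
    exact h1
  have h3 := hh.2.2.2 (pibL ε s g)
  rw [h2] at h3
  simp only [map_sum, TensorProduct.map_tmul, lTensor_tmul, mul'_apply, coe_comp,
    Function.comp_apply, id_coe, id_eq] at h3
  have hX : ∑ q ∈ s, q.1 * S (q.2 * pibL ε s g) = DK.PiL k H Δ ε (pibL ε s g) := by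
    have ha1 := hh.2.1 (pibL ε s g)
    rw [hΔw'] at ha1
    simp only [map_sum, lTensor_tmul, mul'_apply] at ha1
    exact ha1
  have h4 : ∑ p ∈ s, ∑ q ∈ s, S p.1 * (p.2 * q.1 * S (q.2 * pibL ε s g)) =
      DK.PiL k H Δ ε (pibL ε s g) := by
    calc ∑ p ∈ s, ∑ q ∈ s, S p.1 * (p.2 * q.1 * S (q.2 * pibL ε s g))
        = ∑ p ∈ s, (S p.1 * p.2) * (∑ q ∈ s, q.1 * S (q.2 * pibL ε s g)) := by
          apply Finset.sum_congr rfl; intro p _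
          rw [Finset.mul_sum]
          apply Finset.sum_congr rfl; intro q _
          simp only [mul_assoc]
      _ = (∑ p ∈ s, S p.1 * p.2) * (∑ q ∈ s, q.1 * S (q.2 * pibL ε s g)) := by
          rw [Finset.sum_mul]
      _ = DK.PiL k H Δ ε (pibL ε s g) := by rw [pr1 hh hu, one_mul, hX]
  rw [h4] at h3
  rw [← h3, piL_eq hw hu, piL_eq hw hu]
  apply Finset.sum_congr rfl
  intro p _
  rw [d3b hw hu]

lemma sinvPiL (hinv1 : ∀ h, Sinv (S h) = h) (g : H) :
    Sinv (DK.PiL k H Δ ε g) = pibL ε s g := by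
  rw [← b2' hh hu g, hinv1]

lemma b1 (g : H) : Δ 1 * ((pibL ε s g) ⊗ₜ[k] (1:H)) =
    Δ 1 * ((1:H) ⊗ₜ[k] DK.PiL k H Δ ε g) := by
  have hw := hh.1
  -- right side
  have hcr : ∀ x : H, Δ (x * DK.PiL k H Δ ε g) = Δ x * ((DK.PiL k H Δ ε g) ⊗ₜ[k] (1:H)) := by
    intro x; rw [wM hw, d5a hw hu, ← mul_assoc, e1r hw]
  have key2 : ∑ p ∈ s, p.1 ⊗ₜ[k] Δ (p.2 * DK.PiL k H Δ ε g) =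
      ∑ p ∈ s, ∑ q ∈ s, q.1 ⊗ₜ[k] ((p.1 * q.2 * DK.PiL k H Δ ε g) ⊗ₜ[k] p.2) := by
    simp only [hcr]
    have h1 := congrArg (lTensor H (mulRight k ((DK.PiL k H Δ ε g) ⊗ₜ[k] (1:H))))
      (wu2e hw hu)
    simp only [map_sum, lTensor_tmul, mulRight_apply,
      Algebra.TensorProduct.tmul_mul_tmul, mul_one] at h1
    exact h1
  have h2 := congrArg (lTensor H ((TensorProduct.lid k H).toLinearMap ∘ₗ rTensor H ε))
    key2
  simp only [map_sum, lTensor_tmul, coe_comp, LinearEquiv.coe_coe, Function.comp_apply]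
    at h2
  have hc2 : ∀ p : H × H, p.1 ⊗ₜ[k]
      ((TensorProduct.lid k H) ((rTensor H ε) (Δ (p.2 * DK.PiL k H Δ ε g)))) =
      p.1 ⊗ₜ[k] (p.2 * DK.PiL k H Δ ε g) := by
    intro p; rw [wCUl hw]
  simp only [hc2, rTensor_tmul, lid_tmul, TensorProduct.tmul_smul] at h2
  -- left side
  have hcl : ∀ x : H, Δ (x * pibL ε s g) = Δ x * ((1:H) ⊗ₜ[k] pibL ε s g) := by
    intro x; rw [wM hw, d5b hw hu, ← mul_assoc, e1r hw]
  have key1 : ∑ p ∈ s, Δ (p.1 * pibL ε s g) ⊗ₜ[k] p.2 =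
      ∑ p ∈ s, ∑ q ∈ s, (q.1 ⊗ₜ[k] (p.1 * q.2 * pibL ε s g)) ⊗ₜ[k] p.2 := by
    simp only [hcl]
    have h1 := congrArg (rTensor H (mulRight k ((1:H) ⊗ₜ[k] pibL ε s g))) (l3e2 hw hu)
    simp only [map_sum, rTensor_tmul, mulRight_apply,
      Algebra.TensorProduct.tmul_mul_tmul, mul_one, one_mul] at h1
    exact h1
  have h3 := congrArg (rTensor H ((TensorProduct.rid k H).toLinearMap ∘ₗ lTensor H ε))
    key1
  simp only [map_sum, rTensor_tmul, coe_comp, LinearEquiv.coe_coe, Function.comp_apply]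
    at h3
  have hc3 : ∀ p : H × H,
      ((TensorProduct.rid k H) ((lTensor H ε) (Δ (p.1 * pibL ε s g)))) ⊗ₜ[k] p.2 =
      (p.1 * pibL ε s g) ⊗ₜ[k] p.2 := by
    intro p; rw [wCUr hw]
  simp only [hc3, lTensor_tmul, rid_tmul, TensorProduct.smul_tmul'] at h3
  -- combine
  have e2 : Δ 1 * ((1:H) ⊗ₜ[k] DK.PiL k H Δ ε g) =
      ∑ p ∈ s, ∑ q ∈ s, ε (p.1 * q.2 * g) • (q.1 ⊗ₜ[k] p.2) := by
    rw [hu, Finset.sum_mul]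
    simp only [Algebra.TensorProduct.tmul_mul_tmul, one_mul, mul_one]
    rw [h2]
    apply Finset.sum_congr rfl; intro p _
    apply Finset.sum_congr rfl; intro q _
    rw [d3a hw hu]
  have e1 : Δ 1 * ((pibL ε s g) ⊗ₜ[k] (1:H)) =
      ∑ p ∈ s, ∑ q ∈ s, ε (p.1 * q.2 * g) • (q.1 ⊗ₜ[k] p.2) := by
    rw [hu, Finset.sum_mul]
    simp only [Algebra.TensorProduct.tmul_mul_tmul, one_mul, mul_one]
    rw [h3]
    apply Finset.sum_congr rfl; intro p _
    apply Finset.sum_congr rfl; intro q _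
    rw [d3b hw hu, TensorProduct.smul_tmul']
  rw [e1, e2]

lemma b1' (hinv1 : ∀ h, Sinv (S h) = h) (g : H) :
    Δ 1 * ((Sinv (DK.PiL k H Δ ε g)) ⊗ₜ[k] (1:H)) =
    Δ 1 * ((1:H) ⊗ₜ[k] DK.PiL k H Δ ε g) := by
  rw [sinvPiL hh hu hinv1]
  exact b1 hh hu g

end hopf


section modc
variable {C : Type*} [AddCommGroup C] [Module k C] {act : H →ₗ[k] C →ₗ[k] C}

lemma evc_tmul (x : H) (c : C) : DK.evC k H C act (x ⊗ₜ[k] c) = act x c := by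
  simp [DK.evC]

lemma psi2_tmul (x y : H) (c c' : C) :
    DK.Psi2 k H C act ((x ⊗ₜ[k] y) ⊗ₜ[k] (c ⊗ₜ[k] c')) = act x c ⊗ₜ[k] act y c' := by
  simp [DK.Psi2, DK.evC, tensorTensorTensorComm_tmul]

lemma etil_eq (hu : Δ 1 = ∑ p ∈ s, p.1 ⊗ₜ[k] p.2) (εC : C →ₗ[k] k) (c : C) :
    DK.etil k H Δ C act εC c = ∑ p ∈ s, εC (act p.1 c) • p.2 := by
  simp [DK.etil, hu, map_sum, DK.evC, TensorProduct.sum_tmul]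

lemma sigmaC_apply (w : C ⊗[k] C) :
    DK14.sigmaC k H Δ C act w = DK.Psi2 k H C act (Δ 1 ⊗ₜ[k] w) := rfl

section hact
variable (hact : ∀ (g h : H) (c : C), act (g * h) c = act g (act h c))
include hact

lemma psi2_actl (U : H ⊗[k] H) (z : H) (c c' : C) :
    DK.Psi2 k H C act (U ⊗ₜ[k] (act z c ⊗ₜ[k] c')) =
    DK.Psi2 k H C act ((U * (z ⊗ₜ[k] (1:H))) ⊗ₜ[k] (c ⊗ₜ[k] c')) := by
  induction U using TensorProduct.induction_on with
  | zero => simp [zero_tmul, zero_mul]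
  | add u v hu hv => simp only [add_tmul, add_mul, map_add, hu, hv]
  | tmul x y =>
    simp [psi2_tmul, Algebra.TensorProduct.tmul_mul_tmul, ← hact, mul_one]

lemma psi2_actr (U : H ⊗[k] H) (z : H) (c c' : C) :
    DK.Psi2 k H C act (U ⊗ₜ[k] (c ⊗ₜ[k] act z c')) =
    DK.Psi2 k H C act ((U * ((1:H) ⊗ₜ[k] z)) ⊗ₜ[k] (c ⊗ₜ[k] c')) := by
  induction U using TensorProduct.induction_on with
  | zero => simp [zero_tmul, zero_mul]
  | add u v hu hv => simp only [add_tmul, add_mul, map_add, hu, hv]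
  | tmul x y =>
    simp [psi2_tmul, Algebra.TensorProduct.tmul_mul_tmul, ← hact, mul_one]

lemma psi2_rt (U : H ⊗[k] H) (z : H) (w : C ⊗[k] C) :
    DK.Psi2 k H C act (U ⊗ₜ[k] (rTensor C (act z) w)) =
    DK.Psi2 k H C act ((U * (z ⊗ₜ[k] (1:H))) ⊗ₜ[k] w) := by
  induction w using TensorProduct.induction_on with
  | zero => simp
  | add w1 w2 h1 h2 => simp only [map_add, tmul_add, h1, h2]
  | tmul c c' => rw [rTensor_tmul]; exact psi2_actl hact U z c c'

lemma psi2_mul (U V : H ⊗[k] H) (w : C ⊗[k] C) :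
    DK.Psi2 k H C act (U ⊗ₜ[k] DK.Psi2 k H C act (V ⊗ₜ[k] w)) =
    DK.Psi2 k H C act ((U * V) ⊗ₜ[k] w) := by
  induction U using TensorProduct.induction_on with
  | zero => simp [zero_tmul, zero_mul]
  | add u v hu hv => simp only [add_tmul, add_mul, map_add, hu, hv]
  | tmul x y =>
    induction V using TensorProduct.induction_on with
    | zero => simp
    | add u v hu hv => simp only [add_tmul, tmul_add, mul_add, map_add, hu, hv]
    | tmul a b =>
      induction w using TensorProduct.induction_on with
      | zero => simp
      | add w1 w2 h1 h2 => simp only [tmul_add, map_add, h1, h2]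
      | tmul c c' =>
        simp [psi2_tmul, Algebra.TensorProduct.tmul_mul_tmul, hact]

end hact

/-- `Ψ₃ : (H ⊗ (H⊗H)) ⊗ (C ⊗ (C⊗C)) → C ⊗ (C⊗C)`, the diagonal action in three legs. -/
def Psi3 (act : H →ₗ[k] C →ₗ[k] C) :
    (H ⊗[k] (H ⊗[k] H)) ⊗[k] (C ⊗[k] (C ⊗[k] C)) →ₗ[k] C ⊗[k] (C ⊗[k] C) :=
  TensorProduct.map (DK.evC k H C act) (DK.Psi2 k H C act) ∘ₗ
    (TensorProduct.tensorTensorTensorComm k H (H ⊗[k] H) C (C ⊗[k] C)).toLinearMap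

lemma psi3_tmul (x : H) (v : H ⊗[k] H) (c : C) (w : C ⊗[k] C) :
    Psi3 act ((x ⊗ₜ[k] v) ⊗ₜ[k] (c ⊗ₜ[k] w)) =
    act x c ⊗ₜ[k] DK.Psi2 k H C act (v ⊗ₜ[k] w) := by
  simp [Psi3, DK.evC, tensorTensorTensorComm_tmul]

lemma psi3_assoc (V : H ⊗[k] H) (x : H) (W : C ⊗[k] C) (z : C) :
    (TensorProduct.assoc k C C C) ((DK.Psi2 k H C act (V ⊗ₜ[k] W)) ⊗ₜ[k] act x z) =
    Psi3 act ((TensorProduct.assoc k H H H (V ⊗ₜ[k] x)) ⊗ₜ[k]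
      (TensorProduct.assoc k C C C (W ⊗ₜ[k] z))) := by
  induction V using TensorProduct.induction_on with
  | zero => simp [zero_tmul]
  | add u v hu hv => simp only [add_tmul, map_add, hu, hv]
  | tmul a b =>
    induction W using TensorProduct.induction_on with
    | zero => simp [zero_tmul, tmul_zero]
    | add w1 w2 h1 h2 => simp only [add_tmul, tmul_add, map_add, h1, h2]
    | tmul c c' => simp [psi2_tmul, psi3_tmul, TensorProduct.assoc_tmul]

end modc


section quot
variable {C : Type*} [AddCommGroup C] [Module k C] {act : H →ₗ[k] C →ₗ[k] C}
variable (hh : DK.IsWeakHopf k H Δ ε S) (hu : Δ 1 = ∑ p ∈ s, p.1 ⊗ₜ[k] p.2)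
  (hinv1 : ∀ h, Sinv (S h) = h)
  (hact : ∀ (g h : H) (c : C), act (g * h) c = act g (act h c))
include hh hu hinv1 hact

lemma sigma_ker :
    DK14.relCb k H Δ ε Sinv C act ≤ ker (DK14.sigmaC k H Δ C act) := by
  rw [DK14.relCb, Submodule.span_le]
  rintro x ⟨g, c, c', rfl⟩
  simp only [SetLike.mem_coe, mem_ker, map_sub, sub_eq_zero]
  rw [sigmaC_apply, sigmaC_apply, psi2_actl hact, psi2_actr hact, b1' hh hu hinv1]

lemma lift_sigma {w w' : C ⊗[k] C}
    (h : (DK14.relCb k H Δ ε Sinv C act).mkQ w = (DK14.relCb k H Δ ε Sinv C act).mkQ w') :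
    DK14.sigmaC k H Δ C act w = DK14.sigmaC k H Δ C act w' := by
  rw [Submodule.mkQ_apply, Submodule.mkQ_apply, Submodule.Quotient.eq] at h
  have h0 := sigma_ker hh hu hinv1 hact h
  rwa [mem_ker, map_sub, sub_eq_zero] at h0

lemma T_ker : DK14.relCb3 k H Δ ε Sinv C act ≤
    ker ((Psi3 act) ∘ₗ
      TensorProduct.mk k (H ⊗[k] (H ⊗[k] H)) (C ⊗[k] (C ⊗[k] C)) (lTensor H Δ (Δ 1))) := by
  rw [DK14.relCb3, Submodule.span_le]
  rintro x (⟨g, c, y, rfl⟩ | ⟨g, c, c', c'', rfl⟩) <;>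
    simp only [SetLike.mem_coe, mem_ker, map_sub, sub_eq_zero, coe_comp,
      Function.comp_apply, TensorProduct.mk_apply]
  · -- outer relation
    have hC1 : ∑ p ∈ s, (p.1 * Sinv (DK.PiL k H Δ ε g)) ⊗ₜ[k] Δ p.2 =
        lTensor H Δ (Δ 1 * ((Sinv (DK.PiL k H Δ ε g)) ⊗ₜ[k] (1:H))) := by
      rw [hu, Finset.sum_mul]
      simp only [Algebra.TensorProduct.tmul_mul_tmul, mul_one, map_sum, lTensor_tmul]
    have hC2 : ∑ p ∈ s, p.1 ⊗ₜ[k] (Δ p.2 * ((DK.PiL k H Δ ε g) ⊗ₜ[k] (1:H))) =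
        lTensor H Δ (Δ 1 * ((1:H) ⊗ₜ[k] (DK.PiL k H Δ ε g))) := by
      rw [hu, Finset.sum_mul]
      simp only [Algebra.TensorProduct.tmul_mul_tmul, one_mul, map_sum, lTensor_tmul]
      apply Finset.sum_congr rfl; intro p _
      rw [mul_one, wM hh.1, d5a hh.1 hu, ← mul_assoc, e1r hh.1]
    have hmid : ∑ p ∈ s, (p.1 * Sinv (DK.PiL k H Δ ε g)) ⊗ₜ[k] Δ p.2 =
        ∑ p ∈ s, p.1 ⊗ₜ[k] (Δ p.2 * ((DK.PiL k H Δ ε g) ⊗ₜ[k] (1:H))) := by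
      rw [hC1, hC2, b1' hh hu hinv1 g]
    have key := congrArg (TensorProduct.map ((LinearMap.flip act) c)
        (DK.Psi2 k H C act ∘ₗ (TensorProduct.mk k (H ⊗[k] H) (C ⊗[k] C)).flip y)) hmid
    simp only [map_sum, TensorProduct.map_tmul, coe_comp, Function.comp_apply,
      flip_apply, TensorProduct.mk_apply] at key
    rw [hu]
    simp only [map_sum, lTensor_tmul, TensorProduct.sum_tmul, psi3_tmul]
    simp only [psi2_rt hact, ← hact]
    exact key
  · -- inner relation
    have hBal : ∀ x : H, Δ x * ((Sinv (DK.PiL k H Δ ε g)) ⊗ₜ[k] (1:H)) =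
        Δ x * ((1:H) ⊗ₜ[k] DK.PiL k H Δ ε g) := by
      intro x
      conv_lhs => rw [← e1r hh.1 x, mul_assoc, b1' hh hu hinv1, ← mul_assoc, e1r hh.1]
    rw [hu]
    simp only [map_sum, lTensor_tmul, TensorProduct.sum_tmul, psi3_tmul]
    apply Finset.sum_congr rfl
    intro p _
    rw [psi2_actl hact, psi2_actr hact, hBal]

lemma lift_T {w w' : C ⊗[k] (C ⊗[k] C)}
    (h : (DK14.relCb3 k H Δ ε Sinv C act).mkQ w =
      (DK14.relCb3 k H Δ ε Sinv C act).mkQ w') :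
    Psi3 act ((lTensor H Δ (Δ 1)) ⊗ₜ[k] w) = Psi3 act ((lTensor H Δ (Δ 1)) ⊗ₜ[k] w') := by
  rw [Submodule.mkQ_apply, Submodule.mkQ_apply, Submodule.Quotient.eq] at h
  have h0 := T_ker hh hu hinv1 hact h
  rw [mem_ker, coe_comp, Function.comp_apply, TensorProduct.mk_apply,
    TensorProduct.tmul_sub, map_sub, sub_eq_zero] at h0
  exact h0

end quot


section part13
variable {C : Type*} [AddCommGroup C] [Module k C] {act : H →ₗ[k] C →ₗ[k] C}
  {ΔC : C →ₗ[k] C ⊗[k] C} {εC : C →ₗ[k] k}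
variable (hh : DK.IsWeakHopf k H Δ ε S) (hu : Δ 1 = ∑ p ∈ s, p.1 ⊗ₜ[k] p.2)
  (hwm : DK.IsWeakModuleCoalgebra k H Δ ε C act ΔC εC)
include hh hu hwm

lemma cc : ∀ (h : H) (c : C), εC (act h c) = ε (h * DK.etil k H Δ C act εC c) := by
  intro h c
  have h7' := hwm.2.2.2.2.2.2 h 1 c
  rw [mul_one, hu] at h7'
  simp only [map_sum, TensorProduct.map_tmul, coe_comp, Function.comp_apply,
    flip_apply, mulLeft_apply, lid_tmul, smul_eq_mul] at h7'
  rw [etil_eq hu, h7', Finset.mul_sum, map_sum]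
  apply Finset.sum_congr rfl; intro p _
  rw [mul_smul_comm, map_smul, smul_eq_mul]

lemma etil_fix : ∀ c : C, DK.PiL k H Δ ε (DK.etil k H Δ C act εC c) =
    DK.etil k H Δ C act εC c := by
  intro c
  rw [piL_eq hh.1 hu]
  conv_rhs => rw [etil_eq hu]
  apply Finset.sum_congr rfl; intro p _
  rw [← cc hh hu hwm]

lemma dinv : ∀ c : C, ΔC c = DK.Psi2 k H C act (Δ 1 ⊗ₜ[k] ΔC c) := by
  intro c
  have hi := hwm.2.2.2.2.2.1 1 c
  rwa [hwm.2.2.2.2.1] at hi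

lemma part1 (hinv1 : ∀ h, Sinv (S h) = h) :
    DK14.IsBgdModuleCoalgebra k H Δ ε Sinv C act ΔC (DK.etil k H Δ C act εC) := by
  obtain ⟨h1, h2, h3, h4, h5, h6, h7⟩ := hwm
  have hwm' : DK.IsWeakModuleCoalgebra k H Δ ε C act ΔC εC := ⟨h1, h2, h3, h4, h5, h6, h7⟩
  refine ⟨h4, h5, etil_fix hh hu hwm', ?_, ?_, ?_, ?_, ?_⟩
  · intro c; rw [h1 c]
  · -- first counit axiom
    intro c
    obtain ⟨t, ht⟩ := TensorProduct.exists_finset (ΔC c)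
    have hkey : ∑ p ∈ s, ∑ d ∈ t, (act p.1 d.1 ⊗ₜ[k] act p.2 d.2) = ΔC c := by
      conv_rhs => rw [dinv hh hu hwm' c, hu, ht]
      simp only [TensorProduct.sum_tmul, TensorProduct.tmul_sum, map_sum, psi2_tmul]
      rw [Finset.sum_comm]
    rw [ht]
    simp only [map_sum, TensorProduct.map_tmul, id_coe, id_eq]
    simp only [etil_eq hu, TensorProduct.sum_tmul, TensorProduct.smul_tmul', map_sum,
      map_smul, evc_tmul, LinearMap.smul_apply]
    have hres := congrArg ((TensorProduct.lid k C).toLinearMap ∘ₗ rTensor C εC) hkey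
    simp only [map_sum, coe_comp, LinearEquiv.coe_coe, Function.comp_apply, rTensor_tmul,
      lid_tmul] at hres
    rw [h2 c] at hres
    rw [← hres, Finset.sum_comm]
  · -- second counit axiom
    intro c
    obtain ⟨t, ht⟩ := TensorProduct.exists_finset (ΔC c)
    have hkey : ∑ p ∈ s, ∑ d ∈ t, (act p.1 d.1 ⊗ₜ[k] act p.2 d.2) = ΔC c := by
      conv_rhs => rw [dinv hh hu hwm' c, hu, ht]
      simp only [TensorProduct.sum_tmul, TensorProduct.tmul_sum, map_sum, psi2_tmul]
      rw [Finset.sum_comm]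
    rw [ht]
    simp only [map_sum, TensorProduct.comm_tmul, TensorProduct.map_tmul, id_coe, id_eq,
      coe_comp, Function.comp_apply]
    have hsv : ∀ x : C, Sinv (DK.etil k H Δ C act εC x) =
        ∑ p ∈ s, εC (act p.2 x) • p.1 := by
      intro x
      rw [← etil_fix hh hu hwm' x, sinvPiL hh hu hinv1, pibL]
      apply Finset.sum_congr rfl; intro p _
      rw [← cc hh hu hwm']
    simp only [hsv, TensorProduct.sum_tmul, TensorProduct.smul_tmul', map_sum, map_smul,
      evc_tmul, LinearMap.smul_apply]
    have hres := congrArg ((TensorProduct.rid k C).toLinearMap ∘ₗ lTensor C εC) hkey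
    simp only [map_sum, coe_comp, LinearEquiv.coe_coe, Function.comp_apply, lTensor_tmul,
      rid_tmul] at hres
    rw [h3 c] at hres
    rw [← hres, Finset.sum_comm]
  · intro h c; rw [h6 h c]
  · intro h c
    rw [etil_eq hu, piL_eq hh.1 hu]
    apply Finset.sum_congr rfl; intro p _
    rw [← h4, cc hh hu hwm', mul_assoc]

lemma part3a : ∀ c : C, DK14.sigmaC k H Δ C act (ΔC c) = ΔC c := by
  intro c
  rw [sigmaC_apply]
  exact (dinv hh hu hwm c).symm

lemma part3b : ∀ c : C, ε (DK.etil k H Δ C act εC c) = εC c := by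
  intro c
  have h := cc hh hu hwm 1 c
  rw [hwm.2.2.2.2.1 c, one_mul] at h
  exact h.symm

end part13

section part24
variable {C : Type*} [AddCommGroup C] [Module k C] {act : H →ₗ[k] C →ₗ[k] C}
  {ΔCb : C →ₗ[k] C ⊗[k] C} {εCb : C →ₗ[k] H}
variable (hh : DK.IsWeakHopf k H Δ ε S) (hu : Δ 1 = ∑ p ∈ s, p.1 ⊗ₜ[k] p.2)
  (hinv1 : ∀ h, Sinv (S h) = h)
  (hb : DK14.IsBgdModuleCoalgebra k H Δ ε Sinv C act ΔCb εCb)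
include hh hu hinv1 hb

lemma sdact : ∀ (h : H) (x : C), DK14.sigmaC k H Δ C act (ΔCb (act h x)) =
    DK.Psi2 k H C act (Δ h ⊗ₜ[k] ΔCb x) := by
  intro h x
  have hl := lift_sigma hh hu hinv1 hb.1 (hb.2.2.2.2.2.2.1 h x)
  rw [hl, sigmaC_apply, psi2_mul hb.1, e1l hh.1]

lemma part2 : DK.IsWeakModuleCoalgebra k H Δ ε C act
    (DK14.sigmaC k H Δ C act ∘ₗ ΔCb) (ε ∘ₗ εCb) := by
  obtain ⟨g1, g2, g3, g4, g5, g6, g7, g8⟩ := hb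
  have hb' : DK14.IsBgdModuleCoalgebra k H Δ ε Sinv C act ΔCb εCb :=
    ⟨g1, g2, g3, g4, g5, g6, g7, g8⟩
  have hεact : ∀ (a : H) (x : C), ε (εCb (act a x)) = ε (a * εCb x) := by
    intro a x; rw [g8, epiL hh.1 hu]
  refine ⟨?_, ?_, ?_, g1, g2, ?_, ?_⟩
  · -- coassociativity
    intro c
    obtain ⟨t, ht⟩ := TensorProduct.exists_finset (ΔCb c)
    have hσ : (DK14.sigmaC k H Δ C act ∘ₗ ΔCb) c =
        ∑ p ∈ s, ∑ d ∈ t, act p.1 d.1 ⊗ₜ[k] act p.2 d.2 := by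
      rw [comp_apply, sigmaC_apply, hu, ht]
      simp only [TensorProduct.sum_tmul, TensorProduct.tmul_sum, map_sum, psi2_tmul]
      rw [Finset.sum_comm]
    have dist2 : lTensor C (DK14.sigmaC k H Δ C act ∘ₗ ΔCb)
        ((DK14.sigmaC k H Δ C act ∘ₗ ΔCb) c) =
        Psi3 act ((lTensor H Δ (Δ 1)) ⊗ₜ[k] (lTensor C ΔCb (ΔCb c))) := by
      rw [hσ]
      simp only [map_sum, lTensor_tmul, comp_apply]
      simp only [sdact hh hu hinv1 hb']
      conv_rhs => rw [hu, ht]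
      simp only [map_sum, lTensor_tmul, TensorProduct.sum_tmul, TensorProduct.tmul_sum,
        psi3_tmul]
      rw [Finset.sum_comm]
    have dist1 : (TensorProduct.assoc k C C C)
        ((rTensor C (DK14.sigmaC k H Δ C act ∘ₗ ΔCb))
          ((DK14.sigmaC k H Δ C act ∘ₗ ΔCb) c)) =
        Psi3 act (((TensorProduct.assoc k H H H) (rTensor H Δ (Δ 1))) ⊗ₜ[k]
          ((TensorProduct.assoc k C C C) (rTensor C ΔCb (ΔCb c)))) := by
      rw [hσ]
      simp only [map_sum, rTensor_tmul, comp_apply]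
      simp only [sdact hh hu hinv1 hb']
      simp only [psi3_assoc]
      conv_rhs => rw [hu, ht]
      simp only [map_sum, rTensor_tmul, TensorProduct.sum_tmul, TensorProduct.tmul_sum,
        psi3_tmul]
      rw [Finset.sum_comm]
    rw [dist1, wCA hh.1 1, lift_T hh hu hinv1 g1 (g4 c), dist2]
  · -- counit left
    intro c
    obtain ⟨t, ht⟩ := TensorProduct.exists_finset (ΔCb c)
    have hσ : (DK14.sigmaC k H Δ C act ∘ₗ ΔCb) c =
        ∑ p ∈ s, ∑ d ∈ t, act p.1 d.1 ⊗ₜ[k] act p.2 d.2 := by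
      rw [comp_apply, sigmaC_apply, hu, ht]
      simp only [TensorProduct.sum_tmul, TensorProduct.tmul_sum, map_sum, psi2_tmul]
      rw [Finset.sum_comm]
    rw [hσ]
    simp only [map_sum, rTensor_tmul, coe_comp, LinearEquiv.coe_coe, Function.comp_apply,
      lid_tmul]
    simp only [hεact]
    rw [Finset.sum_comm]
    have hin : ∀ d : C × C, ∑ p ∈ s, ε (p.1 * εCb d.1) • act p.2 d.2 =
        act (εCb d.1) d.2 := by
      intro d
      calc ∑ p ∈ s, ε (p.1 * εCb d.1) • act p.2 d.2
          = act (∑ p ∈ s, ε (p.1 * εCb d.1) • p.2) d.2 := by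
            rw [map_sum, LinearMap.sum_apply]
            simp only [map_smul, LinearMap.smul_apply]
        _ = act (DK.PiL k H Δ ε (εCb d.1)) d.2 := by rw [← piL_eq hh.1 hu]
        _ = act (εCb d.1) d.2 := by rw [g3]
    simp only [hin]
    have h5' := g5 c
    rw [ht] at h5'
    simpa only [map_sum, TensorProduct.map_tmul, id_coe, id_eq, evc_tmul] using h5'
  · -- counit right
    intro c
    obtain ⟨t, ht⟩ := TensorProduct.exists_finset (ΔCb c)
    have hσ : (DK14.sigmaC k H Δ C act ∘ₗ ΔCb) c =
        ∑ p ∈ s, ∑ d ∈ t, act p.1 d.1 ⊗ₜ[k] act p.2 d.2 := by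
      rw [comp_apply, sigmaC_apply, hu, ht]
      simp only [TensorProduct.sum_tmul, TensorProduct.tmul_sum, map_sum, psi2_tmul]
      rw [Finset.sum_comm]
    rw [hσ]
    simp only [map_sum, lTensor_tmul, coe_comp, LinearEquiv.coe_coe, Function.comp_apply,
      rid_tmul]
    simp only [hεact]
    rw [Finset.sum_comm]
    have hin : ∀ d : C × C, ∑ p ∈ s, ε (p.2 * εCb d.2) • act p.1 d.1 =
        act (Sinv (εCb d.2)) d.1 := by
      intro d
      calc ∑ p ∈ s, ε (p.2 * εCb d.2) • act p.1 d.1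
          = act (pibL ε s (εCb d.2)) d.1 := by
            rw [pibL, map_sum, LinearMap.sum_apply]
            simp only [map_smul, LinearMap.smul_apply]
        _ = act (Sinv (εCb d.2)) d.1 := by
            rw [← sinvPiL hh hu hinv1, g3]
    simp only [hin]
    have h6' := g6 c
    rw [ht] at h6'
    simpa only [map_sum, TensorProduct.comm_tmul, TensorProduct.map_tmul, id_coe, id_eq,
      coe_comp, Function.comp_apply, evc_tmul] using h6'
  · -- H-linearity of the coproduct
    intro h c
    rw [comp_apply, sdact hh hu hinv1 hb' h c, comp_apply, sigmaC_apply,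
      psi2_mul g1, e1r hh.1]
  · -- weak counit axiom
    intro h g c
    have hfst : ((ε ∘ₗ εCb) ∘ₗ (LinearMap.flip act) c) = ε ∘ₗ mulRight k (εCb c) := by
      ext a
      simp only [coe_comp, Function.comp_apply, flip_apply, mulRight_apply]
      rw [g8, epiL hh.1 hu]
    have hwc := wWC2 hh.1 h g (εCb c)
    rw [DK.eps2'] at hwc
    simp only [coe_comp, Function.comp_apply] at hwc
    simp only [coe_comp, Function.comp_apply]
    rw [g8, epiL hh.1 hu]
    rw [show (ε ∘ₗ εCb) ∘ₗ (LinearMap.flip act) c = ε ∘ₗ mulRight k (εCb c) from hfst]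
    exact hwc

lemma part4a : ∀ w : C ⊗[k] C,
    (DK14.relCb k H Δ ε Sinv C act).mkQ (DK14.sigmaC k H Δ C act w) =
    (DK14.relCb k H Δ ε Sinv C act).mkQ w := by
  intro w
  induction w using TensorProduct.induction_on with
  | zero => simp
  | add u v hiu hiv => simp only [map_add, hiu, hiv]
  | tmul c c' =>
    rw [sigmaC_apply, ← d2' hh.1 hu]
    simp only [TensorProduct.sum_tmul, map_sum, psi2_tmul]
    have hgen : ∀ q : H × H,
        (DK14.relCb k H Δ ε Sinv C act).mkQ (act (pibL ε s q.1) c ⊗ₜ[k] act q.2 c') =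
        (DK14.relCb k H Δ ε Sinv C act).mkQ
          (c ⊗ₜ[k] act (DK.PiL k H Δ ε q.1) (act q.2 c')) := by
      intro q
      rw [← sinvPiL hh hu hinv1]
      rw [Submodule.mkQ_apply, Submodule.mkQ_apply, Submodule.Quotient.eq]
      exact Submodule.subset_span ⟨q.1, c, act q.2 c', rfl⟩
    simp only [hgen]
    simp only [← hb.1]
    have hone : ∑ q ∈ s, (act (DK.PiL k H Δ ε q.1 * q.2)) c' = c' := by
      have hs := sum_piL_mul hh.1 hu
      have h2 := congrArg (fun z : H => act z c') hs
      simpa only [map_sum, LinearMap.sum_apply, hb.2.1] using h2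
    rw [← map_sum, ← TensorProduct.tmul_sum, hone]

lemma part4b : ∀ c : C, DK.etil k H Δ C act (ε ∘ₗ εCb) c = εCb c := by
  intro c
  rw [etil_eq hu]
  calc ∑ p ∈ s, ((ε ∘ₗ εCb) (act p.1 c)) • p.2
      = ∑ p ∈ s, ε (p.1 * εCb c) • p.2 := by
        apply Finset.sum_congr rfl; intro p _
        simp only [coe_comp, Function.comp_apply]
        rw [hb.2.2.2.2.2.2.2, epiL hh.1 hu]
    _ = DK.PiL k H Δ ε (εCb c) := (piL_eq hh.1 hu _).symm
    _ = εCb c := hb.2.2.1 c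

end part24


end WHAux
end

/-- Let `H` be a weak Hopf algebra with bijective antipode, viewed as an
`R`-bialgebroid over `R = Im Π^L`.  The categories of left weak `H`-module coalgebras and
of left module coalgebras over the `R`-bialgebroid `H` are isomorphic.  The functors are
the identity on the underlying `H`-module; a weak structure `(Δ_C, ε_C)` is sent to the
projected coproduct together with the counit `c ↦ ε_C(1₍₁₎·c) 1₍₂₎ ∈ R`, and a bialgebroid
structure `(Δ_C, ε_C)` is sent to the coproduct `c ↦ 1₍₁₎·c₍₁₎ ⊗ 1₍₂₎·c₍₂₎` together with
the counit `ε ∘ ε_C`; these constructions are mutually inverse. -/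
theorem stmt14 (k : Type*) [CommRing k] (H : Type*) [Ring H] [Algebra k H]
    (Δ : H →ₗ[k] H ⊗[k] H) (ε : H →ₗ[k] k) (S Sinv : H →ₗ[k] H)
    (hwh : DK.IsWeakHopf k H Δ ε S)
    (hinv1 : ∀ h, Sinv (S h) = h) (hinv2 : ∀ h, S (Sinv h) = h) :
    -- (1) a weak module coalgebra is a module coalgebra over the bialgebroid:
    (∀ (C : Type) [AddCommGroup C] [Module k C] (act : H →ₗ[k] C →ₗ[k] C)
        (ΔC : C →ₗ[k] C ⊗[k] C) (εC : C →ₗ[k] k),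
      DK.IsWeakModuleCoalgebra k H Δ ε C act ΔC εC →
        DK14.IsBgdModuleCoalgebra k H Δ ε Sinv C act ΔC (DK.etil k H Δ C act εC)) ∧
    -- (2) conversely, a bialgebroid module coalgebra becomes a weak one:
    (∀ (C : Type) [AddCommGroup C] [Module k C] (act : H →ₗ[k] C →ₗ[k] C)
        (ΔCb : C →ₗ[k] C ⊗[k] C) (εCb : C →ₗ[k] H),
      DK14.IsBgdModuleCoalgebra k H Δ ε Sinv C act ΔCb εCb →
        DK.IsWeakModuleCoalgebra k H Δ ε C act
          (DK14.sigmaC k H Δ C act ∘ₗ ΔCb) (ε ∘ₗ εCb)) ∧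
    -- (3) round trip on the weak side is the identity:
    (∀ (C : Type) [AddCommGroup C] [Module k C] (act : H →ₗ[k] C →ₗ[k] C)
        (ΔC : C →ₗ[k] C ⊗[k] C) (εC : C →ₗ[k] k),
      DK.IsWeakModuleCoalgebra k H Δ ε C act ΔC εC →
        (∀ c : C, DK14.sigmaC k H Δ C act (ΔC c) = ΔC c) ∧
        (∀ c : C, ε (DK.etil k H Δ C act εC c) = εC c)) ∧
    -- (4) round trip on the bialgebroid side is the identity (the coproduct up to the
    --     balancing relations, the counit exactly):
    (∀ (C : Type) [AddCommGroup C] [Module k C] (act : H →ₗ[k] C →ₗ[k] C)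
        (ΔCb : C →ₗ[k] C ⊗[k] C) (εCb : C →ₗ[k] H),
      DK14.IsBgdModuleCoalgebra k H Δ ε Sinv C act ΔCb εCb →
        (∀ c : C, (DK14.relCb k H Δ ε Sinv C act).mkQ (DK14.sigmaC k H Δ C act (ΔCb c)) =
          (DK14.relCb k H Δ ε Sinv C act).mkQ (ΔCb c)) ∧
        (∀ c : C, DK.etil k H Δ C act (ε ∘ₗ εCb) c = εCb c)) := by
  obtain ⟨s, hu⟩ := TensorProduct.exists_finset (Δ 1)
  refine ⟨?_, ?_, ?_, ?_⟩
  · intro C _ _ act ΔC εC hwm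
    exact WHAux.part1 hwh hu hwm hinv1
  · intro C _ _ act ΔCb εCb hb
    exact WHAux.part2 hwh hu hinv1 hb
  · intro C _ _ act ΔC εC hwm
    exact ⟨WHAux.part3a hwh hu hwm, WHAux.part3b hwh hu hwm⟩
  · intro C _ _ act ΔCb εCb hb
    exact ⟨fun c => WHAux.part4a hwh hu hinv1 hb (ΔCb c), WHAux.part4b hwh hu hinv1 hb⟩
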